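/- (Uniqueness of the quadratic-cost optimal map) Let μ and ν be probability measures on ℝ^d with finite second moments, and assume μ is absolutely continuous with respect to Lebesgue measure. If T₁ and T₂ are measurable maps from ℝ^d to ℝ^d such that for i = 1, 2 the pushforward of μ under T_i equals ν and ∫ |x − T_i x|² dμ(x) = inf_{π ∈ C(μ,ν)} ∫ |x − y|² dπ(x,y), and each T_i is μ-a.e. the gradient of a convex function, then T₁ = T₂ μ-almost everywhere. -/

import Mathlib

open MeasureTheory Filter Set
open scoped RealInnerProductSpace Topology


/-- **Uniqueness of the quadratic-cost optimal map.** Let `μ`, `ν` be probability measures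
on `ℝ^d` with finite second moments, `μ` absolutely continuous w.r.t. Lebesgue measure. If
`T₁`, `T₂` are measurable maps pushing `μ` to `ν`, each attaining the optimal quadratic
transportation cost `inf_{π ∈ C(μ,ν)} ∫ |x − y|² dπ`, and each being `μ`-a.e. the gradient
of a convex function, then `T₁ = T₂` `μ`-almost everywhere. -/
lemma aux_subgrad {E : Type*} [NormedAddCommGroup E] [InnerProductSpace ℝ E] [CompleteSpace E]
    {f : E → ℝ} (hf : ConvexOn ℝ Set.univ f) {x g : E} (hg : HasGradientAt f g x) (y : E) :
    f x + ⟪g, y - x⟫ ≤ f y := by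
  have hline : HasDerivAt (fun t : ℝ => x + t • (y - x)) (y - x) 0 := by
    simpa using ((hasDerivAt_id (0:ℝ)).smul_const (y - x)).const_add x
  have hφ : HasDerivAt (fun t : ℝ => f (x + t • (y - x))) ⟪g, y - x⟫ 0 := by
    have h1 : HasFDerivAt f (InnerProductSpace.toDual ℝ E g) (x + (0:ℝ) • (y - x)) := by
      simpa using hg.hasFDerivAt
    simpa [InnerProductSpace.toDual_apply_apply, Function.comp_def] using h1.comp_hasDerivAt 0 hline
  have hslope := hasDerivAt_iff_tendsto_slope.mp hφ
  have h2 : Tendsto (slope (fun t : ℝ => f (x + t • (y - x))) 0) (𝓝[>] 0) (𝓝 ⟪g, y - x⟫) :=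
    hslope.mono_left (nhdsWithin_mono 0 (fun t ht => ne_of_gt ht))
  have hev : ∀ᶠ t in 𝓝[>] (0:ℝ), slope (fun t : ℝ => f (x + t • (y - x))) 0 t ≤ f y - f x := by
    filter_upwards [Ioc_mem_nhdsGT_of_mem (by constructor <;> norm_num : (0:ℝ) ∈ Ico (0:ℝ) 1)]
      with t ht
    have hcv := hf.2 (Set.mem_univ x) (Set.mem_univ y) (by linarith [ht.2] : (0:ℝ) ≤ 1 - t)
      (le_of_lt ht.1) (by ring)
    have hpt : (1 - t) • x + t • y = x + t • (y - x) := by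
      rw [sub_smul, one_smul, smul_sub]; abel
    rw [hpt] at hcv
    rw [slope_def_field]
    simp only [zero_smul, add_zero, sub_zero, smul_eq_mul] at *
    rw [div_le_iff₀ ht.1]
    nlinarith [ht.1]
  have := le_of_tendsto h2 hev
  linarith

/-- helper: integrability from a finite `ofReal` lintegral, for a.e.-nonneg functions. -/
lemma aux_integrable_of_lintegral {α : Type*} [MeasurableSpace α] {μ : Measure α} {f : α → ℝ}
    (hm : AEStronglyMeasurable f μ) (h0 : 0 ≤ᵐ[μ] f)
    (hf : ∫⁻ x, ENNReal.ofReal (f x) ∂μ < ⊤) : Integrable f μ :=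
  ⟨hm, (hasFiniteIntegral_iff_ofReal h0).mpr hf⟩

theorem optimal_map_unique {d : ℕ}
    (μ ν : Measure (EuclideanSpace ℝ (Fin d)))
    [IsProbabilityMeasure μ] [IsProbabilityMeasure ν]
    (hμ2 : ∫⁻ x, ENNReal.ofReal (‖x‖ ^ 2) ∂μ < ⊤)
    (hν2 : ∫⁻ x, ENNReal.ofReal (‖x‖ ^ 2) ∂ν < ⊤)
    (hac : μ ≪ volume)
    (T₁ T₂ : EuclideanSpace ℝ (Fin d) → EuclideanSpace ℝ (Fin d))
    (hT₁m : Measurable T₁) (hT₂m : Measurable T₂)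
    (hT₁push : μ.map T₁ = ν) (hT₂push : μ.map T₂ = ν)
    (hT₁opt : (∫⁻ x, ENNReal.ofReal (‖x - T₁ x‖ ^ 2) ∂μ) =
      ⨅ π : {π : Measure (EuclideanSpace ℝ (Fin d) × EuclideanSpace ℝ (Fin d)) //
          π.map Prod.fst = μ ∧ π.map Prod.snd = ν},
        ∫⁻ z, ENNReal.ofReal (‖z.1 - z.2‖ ^ 2) ∂π.1)
    (hT₂opt : (∫⁻ x, ENNReal.ofReal (‖x - T₂ x‖ ^ 2) ∂μ) =
      ⨅ π : {π : Measure (EuclideanSpace ℝ (Fin d) × EuclideanSpace ℝ (Fin d)) //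
          π.map Prod.fst = μ ∧ π.map Prod.snd = ν},
        ∫⁻ z, ENNReal.ofReal (‖z.1 - z.2‖ ^ 2) ∂π.1)
    (hT₁grad : ∃ V₁ : EuclideanSpace ℝ (Fin d) → ℝ, ConvexOn ℝ Set.univ V₁ ∧
      ∀ᵐ x ∂μ, HasGradientAt V₁ (T₁ x) x)
    (hT₂grad : ∃ V₂ : EuclideanSpace ℝ (Fin d) → ℝ, ConvexOn ℝ Set.univ V₂ ∧
      ∀ᵐ x ∂μ, HasGradientAt V₂ (T₂ x) x) :
    T₁ =ᵐ[μ] T₂ := by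
  obtain ⟨V, hVc, hVg⟩ := hT₁grad
  clear hT₂grad hac
  -- continuity / measurability of V
  have hVcont : Continuous V := by
    have := hVc.continuousOn isOpen_univ
    rwa [← continuousOn_univ]
  -- a.e. subgradient inequality for T₁
  have hsub : ∀ᵐ x ∂μ, ∀ z, V x + ⟪T₁ x, z - x⟫ ≤ V z :=
    hVg.mono fun x hx z => aux_subgrad hVc hx z

  -- a point with a global affine lower bound
  have hne : (ae μ).NeBot := ae_neBot.mpr (IsProbabilityMeasure.ne_zero μ)
  obtain ⟨x₀, hx₀⟩ := hsub.exists
  -- dense sequence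
  set s : ℕ → EuclideanSpace ℝ (Fin d) := TopologicalSpace.denseSeq (EuclideanSpace ℝ (Fin d))
    with hs_def
  have hs : DenseRange s := TopologicalSpace.denseRange_denseSeq (EuclideanSpace ℝ (Fin d))
  -- the (truncated) Legendre transform machinery
  set B : Set (EuclideanSpace ℝ (Fin d)) := {y | BddAbove (Set.range fun n => ⟪s n, y⟫ - V (s n))} with hB_def
  have hfn_meas : ∀ n : ℕ, Measurable fun y : EuclideanSpace ℝ (Fin d) => ⟪s n, y⟫ - V (s n) := fun n =>
    ((continuous_const.inner continuous_id).sub continuous_const).measurable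
  have hBmeas : MeasurableSet B := measurableSet_bddAbove_range hfn_meas
  set W : EuclideanSpace ℝ (Fin d) → ℝ := fun y => ⨆ n, (⟪s n, y⟫ - V (s n)) with hW_def
  have hWmeas : Measurable W := Measurable.iSup fun n => hfn_meas n
  -- (K1): for y ∈ B, W y dominates the full Legendre sup
  have hK1 : ∀ y ∈ B, ∀ z, ⟪z, y⟫ - V z ≤ W y := by
    intro y hy
    have hcl : IsClosed {z : EuclideanSpace ℝ (Fin d) | ⟪z, y⟫ - V z ≤ W y} :=
      isClosed_le ((continuous_id.inner continuous_const).sub hVcont) continuous_const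
    have hsub' : Set.range s ⊆ {z : EuclideanSpace ℝ (Fin d) | ⟪z, y⟫ - V z ≤ W y} := by
      rintro _ ⟨n, rfl⟩
      exact le_ciSup hy n
    have h2 : closure (Set.range s) ⊆ {z : EuclideanSpace ℝ (Fin d) | ⟪z, y⟫ - V z ≤ W y} :=
      closure_minimal hsub' hcl
    rw [hs.closure_eq] at h2
    intro z; exact h2 (Set.mem_univ z)
  -- (K2): subgradients lie in B and attain equality
  have hK2 : ∀ x y : EuclideanSpace ℝ (Fin d), (∀ z, V x + ⟪y, z - x⟫ ≤ V z) → y ∈ B ∧ W y = ⟪x, y⟫ - V x := by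
    intro x y h
    have hb : ∀ n, ⟪s n, y⟫ - V (s n) ≤ ⟪x, y⟫ - V x := by
      intro n
      have h1 := h (s n)
      have h2 : ⟪y, s n - x⟫ = ⟪s n, y⟫ - ⟪x, y⟫ := by
        rw [inner_sub_right, real_inner_comm y (s n), real_inner_comm y x]
      linarith [h2 ▸ h1]
    have hyB : y ∈ B := ⟨⟪x, y⟫ - V x, by rintro _ ⟨n, rfl⟩; exact hb n⟩
    exact ⟨hyB, le_antisymm (ciSup_le hb) (hK1 y hyB x)⟩
  -- pushforward facts for B
  have hT1B : ∀ᵐ x ∂μ, T₁ x ∈ B := hsub.mono fun x hx => (hK2 x (T₁ x) hx).1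
  have hWT1 : ∀ᵐ x ∂μ, W (T₁ x) = ⟪x, T₁ x⟫ - V x := hsub.mono fun x hx => (hK2 x (T₁ x) hx).2
  have hνB : ν Bᶜ = 0 := by
    rw [← hT₁push, Measure.map_apply hT₁m hBmeas.compl]
    exact ae_iff.mp hT1B
  have hT2B : ∀ᵐ x ∂μ, T₂ x ∈ B := by
    rw [ae_iff]
    have h : μ (T₂ ⁻¹' Bᶜ) = 0 := by
      rw [← Measure.map_apply hT₂m hBmeas.compl, hT₂push]; exact hνB
    exact h
  -- basic integrability facts
  have hN2 : Integrable (fun x : EuclideanSpace ℝ (Fin d) => ‖x‖ ^ 2) μ :=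
    aux_integrable_of_lintegral (measurable_norm.pow_const 2).aestronglyMeasurable
      (Eventually.of_forall fun x => sq_nonneg _) hμ2
  have hTsq : ∀ (T : EuclideanSpace ℝ (Fin d) → EuclideanSpace ℝ (Fin d)), Measurable T →
      μ.map T = ν → Integrable (fun x => ‖T x‖ ^ 2) μ := by
    intro T hm hpush
    refine aux_integrable_of_lintegral ((measurable_norm.comp hm).pow_const 2).aestronglyMeasurable
      (Eventually.of_forall fun x => sq_nonneg _) ?_
    have h : ∫⁻ x, ENNReal.ofReal (‖T x‖ ^ 2) ∂μ = ∫⁻ y, ENNReal.ofReal (‖y‖ ^ 2) ∂ν := by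
      rw [← hpush, lintegral_map ((measurable_norm.pow_const 2).ennreal_ofReal) hm]
    rw [h]; exact hν2
  have hT1sq := hTsq T₁ hT₁m hT₁push
  have hT2sq := hTsq T₂ hT₂m hT₂push
  have hnorm1 : Integrable (fun x : EuclideanSpace ℝ (Fin d) => ‖x‖) μ := by
    refine ((integrable_const (1 : ℝ)).add hN2).mono' measurable_norm.aestronglyMeasurable ?_
    refine Eventually.of_forall fun x => ?_
    simp only [Pi.add_apply]
    rw [norm_norm]
    nlinarith [norm_nonneg x, sq_nonneg (‖x‖ - 1)]
  have hTn : ∀ (T : EuclideanSpace ℝ (Fin d) → EuclideanSpace ℝ (Fin d)), Measurable T →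
      Integrable (fun x => ‖T x‖ ^ 2) μ → Integrable (fun x => ‖T x‖) μ := by
    intro T hm hsq
    refine ((integrable_const (1 : ℝ)).add hsq).mono'
      (measurable_norm.comp hm).aestronglyMeasurable ?_
    refine Eventually.of_forall fun x => ?_
    simp only [Pi.add_apply, Function.comp_apply]
    rw [norm_norm]
    nlinarith [norm_nonneg (T x), sq_nonneg (‖T x‖ - 1)]
  have hT1n := hTn T₁ hT₁m hT1sq
  have hT2n := hTn T₂ hT₂m hT2sq
  have hinner : ∀ (T : EuclideanSpace ℝ (Fin d) → EuclideanSpace ℝ (Fin d)), Measurable T →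
      Integrable (fun x => ‖T x‖ ^ 2) μ → Integrable (fun x => ⟪x, T x⟫) μ := by
    intro T hm hsq
    refine (hN2.add hsq).mono' (measurable_id.inner hm).aestronglyMeasurable ?_
    refine Eventually.of_forall fun x => ?_
    simp only [Pi.add_apply]
    rw [Real.norm_eq_abs]
    have h := abs_real_inner_le_norm x (T x)
    nlinarith [sq_nonneg (‖x‖ - ‖T x‖), norm_nonneg x, norm_nonneg (T x)]
  have hinner1 := hinner T₁ hT₁m hT1sq
  have hinner2 := hinner T₂ hT₂m hT2sq
  have hlinT : ∀ (c : EuclideanSpace ℝ (Fin d))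
      (T : EuclideanSpace ℝ (Fin d) → EuclideanSpace ℝ (Fin d)), Measurable T →
      Integrable (fun x => ‖T x‖) μ → Integrable (fun x => ⟪c, T x⟫) μ := by
    intro c T hm hn
    refine (hn.const_mul ‖c‖).mono' (measurable_const.inner hm).aestronglyMeasurable ?_
    refine Eventually.of_forall fun x => ?_
    rw [Real.norm_eq_abs]
    exact abs_real_inner_le_norm c (T x)
  have hlin : ∀ c : EuclideanSpace ℝ (Fin d),
      Integrable (fun x : EuclideanSpace ℝ (Fin d) => ⟪c, x⟫) μ :=
    fun c => hlinT c id measurable_id hnorm1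
  -- cost equality gives equality of inner-product integrals
  have hcost : ∫⁻ x, ENNReal.ofReal (‖x - T₁ x‖ ^ 2) ∂μ
      = ∫⁻ x, ENNReal.ofReal (‖x - T₂ x‖ ^ 2) ∂μ := hT₁opt.trans hT₂opt.symm
  have hI : ∫ x, ‖x - T₁ x‖ ^ 2 ∂μ = ∫ x, ‖x - T₂ x‖ ^ 2 ∂μ := by
    have e1 := integral_eq_lintegral_of_nonneg_ae (μ := μ)
      (f := fun x => ‖x - T₁ x‖ ^ 2) (Eventually.of_forall fun x => sq_nonneg _)
      ((measurable_id.sub hT₁m).norm.pow_const 2).aestronglyMeasurable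
    have e2 := integral_eq_lintegral_of_nonneg_ae (μ := μ)
      (f := fun x => ‖x - T₂ x‖ ^ 2) (Eventually.of_forall fun x => sq_nonneg _)
      ((measurable_id.sub hT₂m).norm.pow_const 2).aestronglyMeasurable
    rw [e1, e2, hcost]
  have hexp : ∀ (T : EuclideanSpace ℝ (Fin d) → EuclideanSpace ℝ (Fin d)),
      Integrable (fun x => ‖T x‖ ^ 2) μ → Integrable (fun x => ⟪x, T x⟫) μ →
      ∫ x, ‖x - T x‖ ^ 2 ∂μ
        = ∫ x, ‖x‖ ^ 2 ∂μ - 2 * ∫ x, ⟪x, T x⟫ ∂μ + ∫ x, ‖T x‖ ^ 2 ∂μ := by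
    intro T hsq hin
    have h1 : (fun x => ‖x - T x‖ ^ 2)
        = fun x => (‖x‖ ^ 2 - 2 * ⟪x, T x⟫) + ‖T x‖ ^ 2 := by
      funext x; rw [norm_sub_sq_real]
    rw [h1]
    rw [integral_add (f := fun x => ‖x‖ ^ 2 - 2 * ⟪x, T x⟫) (g := fun x => ‖T x‖ ^ 2)
      (hN2.sub (hin.const_mul 2)) hsq]
    rw [integral_sub (f := fun x : EuclideanSpace ℝ (Fin d) => ‖x‖ ^ 2)
      (g := fun x => 2 * ⟪x, T x⟫) hN2 (hin.const_mul 2)]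
    rw [integral_const_mul (2:ℝ) (fun x => ⟪x, T x⟫)]
  have hmapsq : ∀ (T : EuclideanSpace ℝ (Fin d) → EuclideanSpace ℝ (Fin d)), Measurable T →
      μ.map T = ν → ∫ x, ‖T x‖ ^ 2 ∂μ = ∫ y, ‖y‖ ^ 2 ∂ν := by
    intro T hm hpush
    rw [← hpush, integral_map hm.aemeasurable (measurable_norm.pow_const 2).aestronglyMeasurable]
  have hinner_eq : ∫ x, ⟪x, T₁ x⟫ ∂μ = ∫ x, ⟪x, T₂ x⟫ ∂μ := by
    have e1 := hexp T₁ hT1sq hinner1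
    have e2 := hexp T₂ hT2sq hinner2
    have e3 := (hmapsq T₁ hT₁m hT₁push).trans (hmapsq T₂ hT₂m hT₂push).symm
    rw [e1, e2, e3] at hI
    linarith
  -- integrability of V
  have hVint : Integrable V μ := by
    have ha : Integrable (fun x : EuclideanSpace ℝ (Fin d) =>
        V x₀ + (⟪T₁ x₀, x⟫ - ⟪T₁ x₀, x₀⟫)) μ :=
      (integrable_const _).add ((hlin (T₁ x₀)).sub (integrable_const _))
    have hb : Integrable (fun x => V (s 0) - ⟪s 0, T₁ x⟫ + ⟪x, T₁ x⟫) μ :=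
      ((integrable_const _).sub (hlinT (s 0) T₁ hT₁m hT1n)).add hinner1
    refine (ha.abs.add hb.abs).mono' hVcont.measurable.aestronglyMeasurable ?_
    filter_upwards [hsub] with x hx
    have hlow : V x₀ + (⟪T₁ x₀, x⟫ - ⟪T₁ x₀, x₀⟫) ≤ V x := by
      have h1 := hx₀ x
      rw [inner_sub_right] at h1
      linarith
    have hup : V x ≤ V (s 0) - ⟪s 0, T₁ x⟫ + ⟪x, T₁ x⟫ := by
      have h1 := hx (s 0)
      rw [inner_sub_right, real_inner_comm (s 0) (T₁ x), real_inner_comm x (T₁ x)] at h1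
      linarith
    simp only [Pi.add_apply, Real.norm_eq_abs]
    rw [abs_le]
    constructor
    · have h1 := neg_abs_le (V x₀ + (⟪T₁ x₀, x⟫ - ⟪T₁ x₀, x₀⟫))
      have h2 := abs_nonneg (V (s 0) - ⟪s 0, T₁ x⟫ + ⟪x, T₁ x⟫)
      linarith
    · have h1 := le_abs_self (V (s 0) - ⟪s 0, T₁ x⟫ + ⟪x, T₁ x⟫)
      have h2 := abs_nonneg (V x₀ + (⟪T₁ x₀, x⟫ - ⟪T₁ x₀, x₀⟫))
      linarith
  -- the function ℓ and the nonnegative part of W ∘ T₂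
  set ℓ : EuclideanSpace ℝ (Fin d) → ℝ := fun y => ⟪s 0, y⟫ - V (s 0) with hℓ_def
  have hℓmeas : Measurable ℓ := hfn_meas 0
  have hℓT2int : Integrable (fun x => ℓ (T₂ x)) μ :=
    (hlinT (s 0) T₂ hT₂m hT2n).sub (integrable_const _)
  have hℓT1int : Integrable (fun x => ℓ (T₁ x)) μ :=
    (hlinT (s 0) T₁ hT₁m hT1n).sub (integrable_const _)
  have hc1int : Integrable (fun x => ⟪x, T₁ x⟫ - V x) μ := hinner1.sub hVint
  have hc2int : Integrable (fun x => ⟪x, T₂ x⟫ - V x) μ := hinner2.sub hVint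
  have hWle : ∀ y ∈ B, ℓ y ≤ W y := fun y hy => le_ciSup hy 0
  have hlint_eq : ∀ (T : EuclideanSpace ℝ (Fin d) → EuclideanSpace ℝ (Fin d)), Measurable T →
      μ.map T = ν → ∫⁻ x, ENNReal.ofReal (W (T x) - ℓ (T x)) ∂μ
        = ∫⁻ y, ENNReal.ofReal (W y - ℓ y) ∂ν := by
    intro T hm hpush
    rw [← hpush, lintegral_map (f := fun y => ENNReal.ofReal (W y - ℓ y)) ((hWmeas.sub hℓmeas).ennreal_ofReal) hm]
  have hfin : ∫⁻ x, ENNReal.ofReal (W (T₂ x) - ℓ (T₂ x)) ∂μ < ⊤ := by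
    rw [hlint_eq T₂ hT₂m hT₂push, ← hlint_eq T₁ hT₁m hT₁push]
    have hcongr : ∀ᵐ x ∂μ, ENNReal.ofReal (W (T₁ x) - ℓ (T₁ x))
        = ENNReal.ofReal ((⟪x, T₁ x⟫ - V x) - ℓ (T₁ x)) := by
      filter_upwards [hWT1] with x hx
      rw [hx]
    rw [lintegral_congr_ae hcongr]
    exact (hc1int.sub hℓT1int).lintegral_lt_top
  -- W ∘ T₂ is integrable
  have hr0 : 0 ≤ᵐ[μ] fun x => W (T₂ x) - ℓ (T₂ x) :=
    hT2B.mono fun x hx => sub_nonneg.mpr (hWle _ hx)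
  have hrint : Integrable (fun x => W (T₂ x) - ℓ (T₂ x)) μ :=
    aux_integrable_of_lintegral
      (((hWmeas.comp hT₂m).sub (hℓmeas.comp hT₂m)).aestronglyMeasurable) hr0 hfin
  have hWT2int : Integrable (fun x => W (T₂ x)) μ := by
    exact (hrint.add hℓT2int).congr (Eventually.of_forall fun x => by simp)
  -- the Fenchel gap integrates to zero
  have hmapW : ∀ (T : EuclideanSpace ℝ (Fin d) → EuclideanSpace ℝ (Fin d)), Measurable T →
      μ.map T = ν → ∫ x, W (T x) ∂μ = ∫ y, W y ∂ν := by
    intro T hm hpush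
    rw [← hpush, integral_map hm.aemeasurable hWmeas.aestronglyMeasurable]
  have hIF : ∫ x, (W (T₂ x) - (⟪x, T₂ x⟫ - V x)) ∂μ = 0 := by
    rw [integral_sub hWT2int hc2int]
    have e1 : ∫ x, W (T₂ x) ∂μ = ∫ x, (⟪x, T₁ x⟫ - V x) ∂μ := by
      rw [hmapW T₂ hT₂m hT₂push, ← hmapW T₁ hT₁m hT₁push]
      exact integral_congr_ae hWT1
    have e2 : ∫ x, (⟪x, T₂ x⟫ - V x) ∂μ = ∫ x, (⟪x, T₁ x⟫ - V x) ∂μ := by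
      rw [integral_sub hinner2 hVint, integral_sub hinner1 hVint, hinner_eq]
    rw [e1, e2, sub_self]
  have hF0 : 0 ≤ᵐ[μ] fun x => W (T₂ x) - (⟪x, T₂ x⟫ - V x) :=
    hT2B.mono fun x hx => sub_nonneg.mpr (hK1 _ hx x)
  have hFzero : (fun x => W (T₂ x) - (⟪x, T₂ x⟫ - V x)) =ᵐ[μ] 0 :=
    (integral_eq_zero_iff_of_nonneg_ae hF0 (hWT2int.sub hc2int)).mp hIF
  -- conclusion
  filter_upwards [hFzero, hT2B, hVg] with x hF hB2 hgrad
  have hW2 : W (T₂ x) = ⟪x, T₂ x⟫ - V x := by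
    have : W (T₂ x) - (⟪x, T₂ x⟫ - V x) = 0 := hF
    linarith
  have hsubgr : ∀ z, V x + ⟪T₂ x, z - x⟫ ≤ V z := by
    intro z
    have h1 : ⟪z, T₂ x⟫ - V z ≤ W (T₂ x) := hK1 _ hB2 z
    rw [hW2] at h1
    have h2 : ⟪T₂ x, z - x⟫ = ⟪z, T₂ x⟫ - ⟪x, T₂ x⟫ := by
      rw [inner_sub_right, real_inner_comm z (T₂ x), real_inner_comm x (T₂ x)]
    rw [h2]
    linarith
  have hmin : IsLocalMin (fun z => V z - ⟪T₂ x, z⟫) x := by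
    refine Filter.Eventually.of_forall fun z => ?_
    have h1 := hsubgr z
    have h2 : ⟪T₂ x, z - x⟫ = ⟪T₂ x, z⟫ - ⟪T₂ x, x⟫ := inner_sub_right _ _ _
    simp only []
    linarith [h2 ▸ h1]
  have hfd : HasFDerivAt (fun z => V z - ⟪T₂ x, z⟫)
      (InnerProductSpace.toDual ℝ (EuclideanSpace ℝ (Fin d)) (T₁ x) - innerSL ℝ (T₂ x)) x :=
    hgrad.hasFDerivAt.sub (innerSL ℝ (T₂ x)).hasFDerivAt
  have h0 := hmin.hasFDerivAt_eq_zero hfd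
  have h1 := congrArg (fun L : EuclideanSpace ℝ (Fin d) →L[ℝ] ℝ => L (T₁ x - T₂ x)) h0
  simp only [ContinuousLinearMap.sub_apply, ContinuousLinearMap.zero_apply,
    InnerProductSpace.toDual_apply_apply, innerSL_apply_apply] at h1
  have h2 : ⟪T₁ x - T₂ x, T₁ x - T₂ x⟫ = 0 := by
    rw [inner_sub_left]
    linarith [h1]
  exact sub_eq_zero.mp (inner_self_eq_zero.mp h2)
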